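/- Let C_ν(N,a) = binom(N,ν)·((1+a)/2)^{N−ν}·((1−a)/2)^ν. Then for every real a, every t, x ∈ ℝ, the sequence ψ_N(x,t) = Σ_{ν=0}^N C_ν(N,a)·exp(i(1−2ν/N)x)·exp(−i(1−2ν/N)²t) converges to exp(iax − ia²t) as N → ∞, uniformly on compact subsets of ℝ². -/

import Mathlib

open Filter Finset Complex Topology


noncomputable def epsC (a : ℝ) (k : ℕ) : ℂ := if Even k then 1 else (a : ℂ)

noncomputable def Sm (a : ℝ) (m N : ℕ) : ℂ :=
  ∑ ν ∈ Finset.range (N + 1),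
    (N.choose ν : ℂ) * ((1 + (a : ℂ)) / 2) ^ (N - ν) * ((1 - (a : ℂ)) / 2) ^ ν
      * ((N : ℂ) - 2 * ν) ^ m

lemma pascal_sum (G : ℕ → ℂ) (N : ℕ) :
    ∑ ν ∈ range (N + 2), ((N + 1).choose ν : ℂ) * G ν
      = ∑ ν ∈ range (N + 1), (N.choose ν : ℂ) * G ν
        + ∑ ν ∈ range (N + 1), (N.choose ν : ℂ) * G (ν + 1) := by
  rw [Finset.sum_range_succ' (fun ν => ((N + 1).choose ν : ℂ) * G ν) (N + 1)]
  have h1 : ∀ ν, (((N + 1).choose (ν + 1) : ℕ) : ℂ) = (N.choose ν : ℂ) + (N.choose (ν + 1) : ℂ) := by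
    intro ν; rw [Nat.choose_succ_succ]; push_cast; ring
  simp only [h1, add_mul]
  rw [Finset.sum_add_distrib]
  have h2 : ∑ ν ∈ range (N + 1), (N.choose (ν + 1) : ℂ) * G (ν + 1) + ((N + 1).choose 0 : ℂ) * G 0
      = ∑ ν ∈ range (N + 1), (N.choose ν : ℂ) * G ν := by
    have := (Finset.sum_range_succ' (fun ν => (N.choose ν : ℂ) * G ν) (N + 1)).symm
    simp only [Nat.choose_zero_right, Nat.cast_one, one_mul] at this ⊢
    rw [this, Finset.sum_range_succ, Nat.choose_succ_self]
    simp
  rw [add_assoc, h2]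
  ring

lemma pq_pow (a : ℝ) (z : ℂ) (m : ℕ) :
    (1 + (a : ℂ)) / 2 * (z + 1) ^ m + (1 - (a : ℂ)) / 2 * (z - 1) ^ m
      = ∑ j ∈ range (m + 1), (m.choose j : ℂ) * epsC a (m - j) * z ^ j := by
  have hz1 : (z - 1) ^ m = ∑ j ∈ range (m + 1), z ^ j * (-1 : ℂ) ^ (m - j) * (m.choose j : ℂ) := by
    rw [sub_eq_add_neg, add_pow]
  rw [add_pow, hz1, Finset.mul_sum, Finset.mul_sum, ← Finset.sum_add_distrib]
  refine Finset.sum_congr rfl fun j hj => ?_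
  rcases Nat.even_or_odd (m - j) with he | ho
  · rw [epsC, if_pos he, he.neg_one_pow]
    ring
  · rw [epsC, if_neg (Nat.not_even_iff_odd.mpr ho), ho.neg_one_pow]
    ring

lemma Sm_succ (a : ℝ) (m N : ℕ) :
    Sm a m (N + 1) = ∑ j ∈ range (m + 1), (m.choose j : ℂ) * epsC a (m - j) * Sm a j N := by
  set p : ℂ := (1 + (a : ℂ)) / 2 with hp
  set q : ℂ := (1 - (a : ℂ)) / 2 with hq
  have key : Sm a m (N + 1)
      = ∑ ν ∈ range (N + 2), ((N + 1).choose ν : ℂ)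
          * (p ^ (N + 1 - ν) * q ^ ν * (((N : ℂ) + 1) - 2 * ν) ^ m) := by
    unfold Sm
    refine Finset.sum_congr rfl fun ν _ => ?_
    push_cast
    ring
  rw [key, pascal_sum]
  have hA1 : ∑ ν ∈ range (N + 1), (N.choose ν : ℂ)
        * (p ^ (N + 1 - ν) * q ^ ν * (((N : ℂ) + 1) - 2 * ν) ^ m)
      = ∑ ν ∈ range (N + 1), (N.choose ν : ℂ) * p ^ (N - ν) * q ^ ν
          * (p * (((N : ℂ) - 2 * ν) + 1) ^ m) := by
    refine Finset.sum_congr rfl fun ν hν => ?_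
    have hν' : ν ≤ N := Nat.lt_succ_iff.mp (Finset.mem_range.mp hν)
    rw [show N + 1 - ν = (N - ν) + 1 from by omega]
    rw [pow_succ]
    ring_nf
  have hA2 : ∑ ν ∈ range (N + 1), (N.choose ν : ℂ)
        * (p ^ (N + 1 - (ν + 1)) * q ^ (ν + 1) * (((N : ℂ) + 1) - 2 * (ν + 1 : ℕ)) ^ m)
      = ∑ ν ∈ range (N + 1), (N.choose ν : ℂ) * p ^ (N - ν) * q ^ ν
          * (q * (((N : ℂ) - 2 * ν) - 1) ^ m) := by
    refine Finset.sum_congr rfl fun ν hν => ?_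
    rw [show N + 1 - (ν + 1) = N - ν from by omega, pow_succ]
    push_cast
    ring_nf
  rw [hA1, hA2, ← Finset.sum_add_distrib]
  have hcomb : ∀ ν ∈ range (N + 1),
      (N.choose ν : ℂ) * p ^ (N - ν) * q ^ ν * (p * (((N : ℂ) - 2 * ν) + 1) ^ m)
        + (N.choose ν : ℂ) * p ^ (N - ν) * q ^ ν * (q * (((N : ℂ) - 2 * ν) - 1) ^ m)
      = ∑ j ∈ range (m + 1), (m.choose j : ℂ) * epsC a (m - j)
          * ((N.choose ν : ℂ) * p ^ (N - ν) * q ^ ν * ((N : ℂ) - 2 * ν) ^ j) := by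
    intro ν _
    have := pq_pow a ((N : ℂ) - 2 * ν) m
    calc (N.choose ν : ℂ) * p ^ (N - ν) * q ^ ν * (p * (((N : ℂ) - 2 * ν) + 1) ^ m)
          + (N.choose ν : ℂ) * p ^ (N - ν) * q ^ ν * (q * (((N : ℂ) - 2 * ν) - 1) ^ m)
        = (N.choose ν : ℂ) * p ^ (N - ν) * q ^ ν
            * (p * (((N : ℂ) - 2 * ν) + 1) ^ m + q * (((N : ℂ) - 2 * ν) - 1) ^ m) := by ring
      _ = (N.choose ν : ℂ) * p ^ (N - ν) * q ^ ν
            * ∑ j ∈ range (m + 1), (m.choose j : ℂ) * epsC a (m - j) * ((N : ℂ) - 2 * ν) ^ j := by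
          rw [← this]
      _ = _ := by rw [Finset.mul_sum]; refine Finset.sum_congr rfl fun j _ => ?_; ring
  rw [Finset.sum_congr rfl hcomb, Finset.sum_comm]
  refine Finset.sum_congr rfl fun j _ => ?_
  rw [Sm, Finset.mul_sum]

lemma Sm_N0 (a : ℝ) (m : ℕ) : Sm a m 0 = (0 : ℂ) ^ m := by
  simp [Sm]

lemma norm_epsC (a : ℝ) (k : ℕ) : ‖epsC a k‖ ≤ (max 1 |a|) ^ k := by
  have hA1 : (1 : ℝ) ≤ max 1 |a| := le_max_left _ _
  rcases Nat.even_or_odd k with he | ho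
  · rw [epsC, if_pos he, norm_one]
    exact one_le_pow₀ hA1
  · rw [epsC, if_neg (Nat.not_even_iff_odd.mpr ho), Complex.norm_real, Real.norm_eq_abs]
    calc |a| ≤ max 1 |a| := le_max_right _ _
      _ ≤ (max 1 |a|) ^ k := le_self_pow₀ hA1 (by rintro rfl; exact (Nat.not_even_iff_odd.mpr ho) Even.zero)

lemma Sm_bound (a : ℝ) : ∀ N m : ℕ, ‖Sm a m N‖ ≤ ((N : ℝ) * max 1 |a|) ^ m := by
  intro N
  induction N with
  | zero =>
    intro m
    rw [Sm_N0, norm_pow, norm_zero]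
    simp
  | succ N ih =>
    intro m
    rw [Sm_succ]
    calc ‖∑ j ∈ range (m + 1), (m.choose j : ℂ) * epsC a (m - j) * Sm a j N‖
        ≤ ∑ j ∈ range (m + 1), ‖(m.choose j : ℂ) * epsC a (m - j) * Sm a j N‖ :=
          norm_sum_le _ _
      _ ≤ ∑ j ∈ range (m + 1), ((N : ℝ) * max 1 |a|) ^ j * (max 1 |a|) ^ (m - j) * (m.choose j : ℝ) := by
          refine Finset.sum_le_sum fun j _ => ?_
          rw [norm_mul, norm_mul, Complex.norm_natCast]
          calc (m.choose j : ℝ) * ‖epsC a (m - j)‖ * ‖Sm a j N‖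
              ≤ (m.choose j : ℝ) * (max 1 |a|) ^ (m - j) * (((N : ℝ) * max 1 |a|) ^ j) := by
                apply mul_le_mul
                · exact mul_le_mul_of_nonneg_left (norm_epsC a _) (by positivity)
                · exact ih j
                · exact norm_nonneg _
                · positivity
            _ = _ := by ring
      _ = ((N : ℝ) * max 1 |a| + max 1 |a|) ^ m := (add_pow _ _ m).symm
      _ = (((N : ℕ) + 1 : ℝ) * max 1 |a|) ^ m := by ring_nf
      _ = ((((N + 1) : ℕ) : ℝ) * max 1 |a|) ^ m := by norm_num

lemma Sm_m0 (a : ℝ) (N : ℕ) : Sm a 0 N = 1 := by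
  have h := add_pow ((1 - (a : ℂ)) / 2) ((1 + (a : ℂ)) / 2) N
  have h1 : (1 - (a : ℂ)) / 2 + (1 + (a : ℂ)) / 2 = 1 := by ring
  rw [h1, one_pow] at h
  rw [Sm]
  calc ∑ ν ∈ Finset.range (N + 1),
        (N.choose ν : ℂ) * ((1 + (a : ℂ)) / 2) ^ (N - ν) * ((1 - (a : ℂ)) / 2) ^ ν
          * ((N : ℂ) - 2 * ν) ^ 0
      = ∑ ν ∈ Finset.range (N + 1),
          ((1 - (a : ℂ)) / 2) ^ ν * ((1 + (a : ℂ)) / 2) ^ (N - ν) * (N.choose ν : ℂ) := by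
        refine Finset.sum_congr rfl fun ν _ => ?_
        ring
    _ = 1 := h.symm

lemma Sm_m1 (a : ℝ) (N : ℕ) : Sm a 1 N = (N : ℂ) * a := by
  induction N with
  | zero => rw [Sm_N0]; simp
  | succ N ih =>
    rw [Sm_succ]
    rw [Finset.sum_range_succ, Finset.sum_range_one]
    simp only [Nat.choose_zero_right, Nat.choose_one_right, Nat.cast_one]
    rw [Sm_m0, ih]
    have e1 : epsC a 1 = (a : ℂ) := by rw [epsC]; norm_num
    have e0 : epsC a 0 = 1 := by rw [epsC]; norm_num
    rw [show (1:ℕ) - 1 = 0 from rfl, show (1:ℕ) - 0 = 1 from rfl, e0, e1]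
    push_cast
    ring

lemma Sm_N1 (a : ℝ) (m : ℕ) : Sm a m 1 = epsC a m := by
  rw [show (1:ℕ) = 0 + 1 from rfl, Sm_succ]
  rw [Finset.sum_eq_single 0]
  · simp [Sm_N0]
  · intro j _ hj
    rw [Sm_N0, zero_pow hj, mul_zero]
  · intro h; exact absurd (Finset.mem_range.mpr (Nat.succ_pos m)) h

lemma norm_apow (a : ℝ) (k : ℕ) : ‖((a:ℂ)) ^ k‖ ≤ (max 1 |a|) ^ k := by
  rw [norm_pow, Complex.norm_real, Real.norm_eq_abs]
  exact pow_le_pow_left₀ (abs_nonneg a) (le_max_right _ _) k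

lemma Dm_bound (a : ℝ) : ∀ m : ℕ, ∃ B : ℝ, 0 ≤ B ∧ ∀ N : ℕ, 1 ≤ N →
    ‖Sm a m N - ((N : ℂ) * a) ^ m‖ ≤ B * (N : ℝ) ^ (m - 1) := by
  set A := max 1 |a| with hA
  have hA1 : (1:ℝ) ≤ A := le_max_left _ _
  have hA0 : (0:ℝ) ≤ A := by linarith
  intro m
  induction m using Nat.strong_induction_on with
  | _ m ih =>
    match m, ih with
    | 0, _ => exact ⟨0, le_refl 0, fun N _ => by simp [Sm_m0]⟩
    | 1, _ => exact ⟨0, le_refl 0, fun N _ => by simp [Sm_m1]⟩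
    | (k+2), ih =>
      set m := k + 2 with hm
      choose Bf hBf0 hBf using fun j (h : j < m) => ih j h
      set B' : ℕ → ℝ := fun j => if h : j < m then Bf j h else 0 with hB'
      have hB'0 : ∀ j, 0 ≤ B' j := by
        intro j; rw [hB']; dsimp only; split
        · exact hBf0 _ _
        · exact le_refl 0
      have hB'le : ∀ j, j < m → ∀ N : ℕ, 1 ≤ N →
          ‖Sm a j N - ((N : ℂ) * a) ^ j‖ ≤ B' j * (N : ℝ) ^ (j - 1) := by
        intro j hj N hN
        rw [hB']; dsimp only; rw [dif_pos hj]
        exact hBf j hj N hN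
      set C : ℝ := ∑ j ∈ range (k + 2), (m.choose j : ℝ) * (A ^ (m - j) * B' j + 2 * A ^ m) with hC
      have hC0 : 0 ≤ C := by
        apply Finset.sum_nonneg
        intro j _
        have := hB'0 j
        positivity
      refine ⟨2 * A ^ m + C, by positivity, ?_⟩
      intro N hN
      induction N, hN using Nat.le_induction with
      | base =>
        rw [Sm_N1]
        calc ‖epsC a m - ((1:ℕ) * (a:ℂ)) ^ m‖ ≤ ‖epsC a m‖ + ‖((1:ℕ) * (a:ℂ)) ^ m‖ :=
              norm_sub_le _ _
          _ ≤ A ^ m + A ^ m := by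
              refine add_le_add (norm_epsC a m) ?_
              rw [Nat.cast_one, one_mul]
              exact norm_apow a m
          _ = 2 * A ^ m := by ring
          _ ≤ (2 * A ^ m + C) * (1:ℝ) ^ (m - 1) := by
              rw [one_pow, mul_one]; linarith
          _ = (2 * A ^ m + C) * ((1:ℕ) : ℝ) ^ (m - 1) := by norm_num
      | succ N hN1 ihN =>
        have hNR : (1:ℝ) ≤ (N:ℝ) := by exact_mod_cast hN1
        have hNR0 : (0:ℝ) ≤ (N:ℝ) := by linarith
        -- decompose
        have hdec : Sm a m (N + 1) - (((N:ℕ)+1 : ℂ) * a) ^ m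
            = (Sm a m N - ((N : ℂ) * a) ^ m)
              + ∑ j ∈ range (k + 2), (m.choose j : ℂ) *
                  (epsC a (m - j) * Sm a j N - (a:ℂ) ^ (m - j) * ((N : ℂ) * a) ^ j) := by
          rw [Sm_succ]
          have hpow : (((N:ℕ)+1 : ℂ) * a) ^ m
              = ∑ j ∈ range (m + 1), ((N:ℂ)*a)^j * (a:ℂ)^(m-j) * (m.choose j : ℂ) := by
            rw [show (((N:ℕ)+1:ℂ) * a) = (N:ℂ)*a + a by push_cast; ring, add_pow]
          rw [hpow, ← Finset.sum_sub_distrib, Finset.sum_range_succ, add_comm]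
          congr 1
          · have e0 : epsC a (m - m) = 1 := by simp [epsC]
            rw [e0, Nat.choose_self, Nat.sub_self]
            push_cast
            ring
          · refine Finset.sum_congr rfl fun j _ => ?_
            ring
        push_cast
        rw [hdec]
        have hterm : ∀ j ∈ range (k + 2),
            ‖(m.choose j : ℂ) * (epsC a (m - j) * Sm a j N - (a:ℂ) ^ (m - j) * ((N : ℂ) * a) ^ j)‖
              ≤ (m.choose j : ℝ) * (A ^ (m - j) * B' j + 2 * A ^ m) * (N : ℝ) ^ k := by
          intro j hj
          have hjm : j < m := Finset.mem_range.mp hj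
          have split : epsC a (m - j) * Sm a j N - (a:ℂ) ^ (m - j) * ((N : ℂ) * a) ^ j
              = epsC a (m - j) * (Sm a j N - ((N : ℂ) * a) ^ j)
                + (epsC a (m - j) - (a:ℂ) ^ (m - j)) * ((N : ℂ) * a) ^ j := by ring
          have h1 : ‖epsC a (m - j) * (Sm a j N - ((N : ℂ) * a) ^ j)‖
              ≤ A ^ (m - j) * (B' j * (N : ℝ) ^ k) := by
            rw [norm_mul]
            refine mul_le_mul (norm_epsC a _) ?_ (norm_nonneg _) (by positivity)
            calc ‖Sm a j N - ((N : ℂ) * a) ^ j‖ ≤ B' j * (N : ℝ) ^ (j - 1) :=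
                  hB'le j hjm N hN1
              _ ≤ B' j * (N : ℝ) ^ k := by
                  refine mul_le_mul_of_nonneg_left ?_ (hB'0 j)
                  exact pow_le_pow_right₀ hNR (by omega)
          have hsum : ‖epsC a (m - j) * (Sm a j N - ((N : ℂ) * a) ^ j)
                + (epsC a (m - j) - (a:ℂ) ^ (m - j)) * ((N : ℂ) * a) ^ j‖
              ≤ (A ^ (m - j) * B' j + 2 * A ^ m) * (N : ℝ) ^ k := by
            rcases Nat.lt_or_ge j (k + 1) with hjk | hjk
            · have h2 : ‖(epsC a (m - j) - (a:ℂ) ^ (m - j)) * ((N : ℂ) * a) ^ j‖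
                  ≤ 2 * A ^ m * (N : ℝ) ^ k := by
                rw [norm_mul]
                have hb1 : ‖epsC a (m - j) - (a:ℂ) ^ (m - j)‖ ≤ 2 * A ^ (m - j) := by
                  calc ‖epsC a (m - j) - (a:ℂ) ^ (m - j)‖
                      ≤ ‖epsC a (m - j)‖ + ‖(a:ℂ) ^ (m - j)‖ := norm_sub_le _ _
                    _ ≤ A ^ (m - j) + A ^ (m - j) := add_le_add (norm_epsC a _) (norm_apow a _)
                    _ = 2 * A ^ (m - j) := by ring
                have hb2 : ‖((N : ℂ) * a) ^ j‖ ≤ (N : ℝ) ^ k * A ^ j := by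
                  rw [norm_pow, norm_mul, Complex.norm_natCast, Complex.norm_real,
                    Real.norm_eq_abs, mul_pow]
                  refine mul_le_mul ?_ ?_ (by positivity) (by positivity)
                  · exact pow_le_pow_right₀ hNR (by omega)
                  · exact pow_le_pow_left₀ (abs_nonneg a) (le_max_right _ _) j
                calc ‖epsC a (m - j) - (a:ℂ) ^ (m - j)‖ * ‖((N : ℂ) * a) ^ j‖
                    ≤ (2 * A ^ (m - j)) * ((N : ℝ) ^ k * A ^ j) := by
                      refine mul_le_mul hb1 hb2 (norm_nonneg _) (by positivity)
                  _ = 2 * (A ^ (m - j) * A ^ j) * (N : ℝ) ^ k := by ring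
                  _ = 2 * A ^ m * (N : ℝ) ^ k := by
                      rw [← pow_add, Nat.sub_add_cancel (le_of_lt hjm)]
              calc ‖epsC a (m - j) * (Sm a j N - ((N : ℂ) * a) ^ j)
                    + (epsC a (m - j) - (a:ℂ) ^ (m - j)) * ((N : ℂ) * a) ^ j‖
                  ≤ ‖epsC a (m - j) * (Sm a j N - ((N : ℂ) * a) ^ j)‖
                    + ‖(epsC a (m - j) - (a:ℂ) ^ (m - j)) * ((N : ℂ) * a) ^ j‖ := norm_add_le _ _
                _ ≤ A ^ (m - j) * (B' j * (N : ℝ) ^ k) + 2 * A ^ m * (N : ℝ) ^ k :=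
                    add_le_add h1 h2
                _ = (A ^ (m - j) * B' j + 2 * A ^ m) * (N : ℝ) ^ k := by ring
            · have hmj : m - j = 1 := by omega
              have hz : epsC a (m - j) - (a:ℂ) ^ (m - j) = 0 := by
                rw [hmj]; simp [epsC, pow_one]
              rw [hz, zero_mul, add_zero]
              calc ‖epsC a (m - j) * (Sm a j N - ((N : ℂ) * a) ^ j)‖
                  ≤ A ^ (m - j) * (B' j * (N : ℝ) ^ k) := h1
                _ = A ^ (m - j) * B' j * (N : ℝ) ^ k := by ring
                _ ≤ (A ^ (m - j) * B' j + 2 * A ^ m) * (N : ℝ) ^ k := by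
                    have h2 : (0:ℝ) ≤ 2 * A ^ m := by positivity
                    nlinarith [pow_nonneg hNR0 k]
          rw [norm_mul, Complex.norm_natCast, split]
          calc (m.choose j : ℝ) * ‖epsC a (m - j) * (Sm a j N - ((N : ℂ) * a) ^ j)
                + (epsC a (m - j) - (a:ℂ) ^ (m - j)) * ((N : ℂ) * a) ^ j‖
              ≤ (m.choose j : ℝ) * ((A ^ (m - j) * B' j + 2 * A ^ m) * (N : ℝ) ^ k) :=
                mul_le_mul_of_nonneg_left hsum (by positivity)
            _ = (m.choose j : ℝ) * (A ^ (m - j) * B' j + 2 * A ^ m) * (N : ℝ) ^ k := by ring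
        calc ‖(Sm a m N - ((N : ℂ) * a) ^ m)
              + ∑ j ∈ range (k + 2), (m.choose j : ℂ) *
                  (epsC a (m - j) * Sm a j N - (a:ℂ) ^ (m - j) * ((N : ℂ) * a) ^ j)‖
            ≤ ‖Sm a m N - ((N : ℂ) * a) ^ m‖
              + ∑ j ∈ range (k + 2), ‖(m.choose j : ℂ) *
                  (epsC a (m - j) * Sm a j N - (a:ℂ) ^ (m - j) * ((N : ℂ) * a) ^ j)‖ := by
              refine le_trans (norm_add_le _ _) ?_
              gcongr
              exact norm_sum_le _ _
          _ ≤ (2 * A ^ m + C) * (N : ℝ) ^ (m - 1)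
              + ∑ j ∈ range (k + 2), (m.choose j : ℝ) * (A ^ (m - j) * B' j + 2 * A ^ m) * (N : ℝ) ^ k :=
              add_le_add ihN (Finset.sum_le_sum hterm)
          _ = (2 * A ^ m + C) * (N : ℝ) ^ (k + 1) + C * (N : ℝ) ^ k := by
              rw [← Finset.sum_mul, ← hC, show m - 1 = k + 1 from rfl]
          _ ≤ (2 * A ^ m + C) * (N : ℝ) ^ (k + 1) + (2 * A ^ m + C) * (N : ℝ) ^ k := by
              have h2 : (0:ℝ) ≤ 2 * A ^ m := by positivity
              have hp : (0:ℝ) ≤ (N : ℝ) ^ k := by positivity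
              nlinarith
          _ = (2 * A ^ m + C) * ((N : ℝ) ^ k * ((N : ℝ) + 1)) := by ring
          _ ≤ (2 * A ^ m + C) * (((N : ℝ) + 1) ^ k * ((N : ℝ) + 1)) := by
              have : (0:ℝ) ≤ 2 * A ^ m + C := by positivity
              gcongr
              linarith
          _ = (2 * A ^ m + C) * ((N : ℝ) + 1) ^ (m - 1) := by
              rw [show m - 1 = k + 1 from rfl, pow_succ]
              ring

lemma Tlim (a : ℝ) (m : ℕ) :
    Filter.Tendsto (fun N : ℕ => Sm a m N / (N : ℂ) ^ m) Filter.atTop (𝓝 ((a : ℂ) ^ m)) := by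
  rcases Nat.eq_zero_or_pos m with rfl | hm
  · simp only [pow_zero, div_one, Sm_m0]
    exact tendsto_const_nhds
  obtain ⟨B, hB0, hB⟩ := Dm_bound a m
  rw [tendsto_iff_norm_sub_tendsto_zero]
  refine squeeze_zero_norm' ?_ (tendsto_const_div_atTop_nhds_zero_nat B)
  filter_upwards [Filter.eventually_ge_atTop 1] with N hN
  have hN0 : ((N : ℂ)) ≠ 0 := Nat.cast_ne_zero.mpr (by omega)
  have hNp : ((N : ℂ) ^ m) ≠ 0 := pow_ne_zero _ hN0
  have key : Sm a m N / (N : ℂ) ^ m - (a : ℂ) ^ m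
      = (Sm a m N - ((N : ℂ) * a) ^ m) / (N : ℂ) ^ m := by
    field_simp
    ring
  rw [norm_norm, key, norm_div, norm_pow, Complex.norm_natCast]
  have hNR : (1:ℝ) ≤ (N:ℝ) := by exact_mod_cast hN
  have hNR0 : (0:ℝ) < (N:ℝ) := by linarith
  rw [div_le_iff₀ (by positivity)]
  calc ‖Sm a m N - ((N : ℂ) * a) ^ m‖ ≤ B * (N : ℝ) ^ (m - 1) := hB N hN
    _ = B / (N:ℝ) * (N:ℝ) ^ m := by
        rw [show m = (m - 1) + 1 from by omega, pow_succ]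
        rw [show (m - 1) + 1 - 1 = m - 1 from by omega]
        field_simp

lemma cexp_tsum (z : ℂ) : Complex.exp z = ∑' n : ℕ, z ^ n / (Nat.factorial n : ℂ) := by
  rw [Complex.exp_eq_exp_ℂ, NormedSpace.exp_eq_tsum_div]

lemma summable_pow_fact (z : ℂ) : Summable (fun n : ℕ => ‖z ^ n / (Nat.factorial n : ℂ)‖) := by
  simpa [norm_div, norm_pow] using Real.summable_pow_div_factorial ‖z‖

lemma summable_cl (l x t : ℂ) :
    Summable (fun jk : ℕ × ℕ =>
      (Complex.I * x) ^ jk.1 / (Nat.factorial jk.1 : ℂ)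
        * ((-Complex.I * t) ^ jk.2 / (Nat.factorial jk.2 : ℂ)) * l ^ (jk.1 + 2 * jk.2)) := by
  apply Summable.congr
    (summable_mul_of_summable_norm (summable_pow_fact (Complex.I * x * l))
      (summable_pow_fact (-Complex.I * t * l ^ 2)))
  intro jk
  rw [pow_add, pow_mul]
  ring

lemma expExp (l x t : ℂ) :
    Complex.exp (Complex.I * l * x) * Complex.exp (-Complex.I * l ^ 2 * t)
      = ∑' jk : ℕ × ℕ,
          (Complex.I * x) ^ jk.1 / (Nat.factorial jk.1 : ℂ)
            * ((-Complex.I * t) ^ jk.2 / (Nat.factorial jk.2 : ℂ)) * l ^ (jk.1 + 2 * jk.2) := by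
  rw [cexp_tsum, cexp_tsum,
    tsum_mul_tsum_of_summable_norm (summable_pow_fact _) (summable_pow_fact _)]
  refine tsum_congr fun jk => ?_
  rw [pow_add, pow_mul]
  ring

lemma sum_lam_pow (a : ℝ) (N : ℕ) (hN : 1 ≤ N) (m : ℕ) :
    ∑ ν ∈ Finset.range (N + 1),
        (N.choose ν : ℂ) * ((1 + (a : ℂ)) / 2) ^ (N - ν) * ((1 - (a : ℂ)) / 2) ^ ν
          * (1 - 2 * (ν : ℂ) / (N : ℂ)) ^ m
      = Sm a m N / (N : ℂ) ^ m := by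
  have hN0 : ((N : ℂ)) ≠ 0 := Nat.cast_ne_zero.mpr (by omega)
  have : ∀ ν : ℕ, (1 - 2 * (ν : ℂ) / (N : ℂ)) ^ m = ((N : ℂ) - 2 * ν) ^ m / (N : ℂ) ^ m := by
    intro ν
    rw [← div_pow]
    congr 1
    field_simp
  simp only [this]
  unfold Sm
  rw [Finset.sum_div]
  refine Finset.sum_congr rfl fun ν _ => ?_
  ring

lemma FF_eq (a : ℝ) (N : ℕ) (hN : 1 ≤ N) (x t : ℝ) :
    (∑ ν ∈ Finset.range (N + 1),
        (N.choose ν : ℂ) * ((1 + (a : ℂ)) / 2) ^ (N - ν) * ((1 - (a : ℂ)) / 2) ^ ν *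
          Complex.exp (Complex.I * (1 - 2 * (ν : ℂ) / (N : ℂ)) * (x : ℂ)) *
          Complex.exp (-Complex.I * (1 - 2 * (ν : ℂ) / (N : ℂ)) ^ 2 * (t : ℂ)))
      = ∑' jk : ℕ × ℕ,
          (Complex.I * (x:ℂ)) ^ jk.1 / (Nat.factorial jk.1 : ℂ)
            * ((-Complex.I * (t:ℂ)) ^ jk.2 / (Nat.factorial jk.2 : ℂ))
            * (Sm a (jk.1 + 2 * jk.2) N / (N : ℂ) ^ (jk.1 + 2 * jk.2)) := by
  have hterm : ∀ ν ∈ Finset.range (N + 1),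
      (N.choose ν : ℂ) * ((1 + (a : ℂ)) / 2) ^ (N - ν) * ((1 - (a : ℂ)) / 2) ^ ν *
          Complex.exp (Complex.I * (1 - 2 * (ν : ℂ) / (N : ℂ)) * (x : ℂ)) *
          Complex.exp (-Complex.I * (1 - 2 * (ν : ℂ) / (N : ℂ)) ^ 2 * (t : ℂ))
        = ∑' jk : ℕ × ℕ,
            (N.choose ν : ℂ) * ((1 + (a : ℂ)) / 2) ^ (N - ν) * ((1 - (a : ℂ)) / 2) ^ ν *
              ((Complex.I * (x:ℂ)) ^ jk.1 / (Nat.factorial jk.1 : ℂ)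
                * ((-Complex.I * (t:ℂ)) ^ jk.2 / (Nat.factorial jk.2 : ℂ))
                * (1 - 2 * (ν : ℂ) / (N : ℂ)) ^ (jk.1 + 2 * jk.2)) := by
    intro ν _
    rw [mul_assoc _ (Complex.exp _) (Complex.exp _), expExp, ← tsum_mul_left]
  have hswap := Summable.tsum_finsetSum (s := Finset.range (N + 1))
    (f := fun ν (jk : ℕ × ℕ) =>
      (N.choose ν : ℂ) * ((1 + (a : ℂ)) / 2) ^ (N - ν) * ((1 - (a : ℂ)) / 2) ^ ν *
        ((Complex.I * (x:ℂ)) ^ jk.1 / (Nat.factorial jk.1 : ℂ)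
          * ((-Complex.I * (t:ℂ)) ^ jk.2 / (Nat.factorial jk.2 : ℂ))
          * (1 - 2 * (ν : ℂ) / (N : ℂ)) ^ (jk.1 + 2 * jk.2)))
    (fun ν _ => ((summable_cl (1 - 2 * (ν : ℂ) / (N : ℂ)) (x:ℂ) (t:ℂ)).mul_left
      ((N.choose ν : ℂ) * ((1 + (a : ℂ)) / 2) ^ (N - ν) * ((1 - (a : ℂ)) / 2) ^ ν)))
  rw [Finset.sum_congr rfl hterm, ← hswap]
  refine tsum_congr fun jk => ?_
  calc ∑ ν ∈ Finset.range (N + 1),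
        (N.choose ν : ℂ) * ((1 + (a : ℂ)) / 2) ^ (N - ν) * ((1 - (a : ℂ)) / 2) ^ ν *
          ((Complex.I * (x:ℂ)) ^ jk.1 / (Nat.factorial jk.1 : ℂ)
            * ((-Complex.I * (t:ℂ)) ^ jk.2 / (Nat.factorial jk.2 : ℂ))
            * (1 - 2 * (ν : ℂ) / (N : ℂ)) ^ (jk.1 + 2 * jk.2))
      = (Complex.I * (x:ℂ)) ^ jk.1 / (Nat.factorial jk.1 : ℂ)
          * ((-Complex.I * (t:ℂ)) ^ jk.2 / (Nat.factorial jk.2 : ℂ))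
          * ∑ ν ∈ Finset.range (N + 1),
              (N.choose ν : ℂ) * ((1 + (a : ℂ)) / 2) ^ (N - ν) * ((1 - (a : ℂ)) / 2) ^ ν
                * (1 - 2 * (ν : ℂ) / (N : ℂ)) ^ (jk.1 + 2 * jk.2) := by
        rw [Finset.mul_sum]
        refine Finset.sum_congr rfl fun ν _ => ?_
        ring
    _ = _ := by rw [sum_lam_pow a N hN]

lemma target_eq (a : ℝ) (x t : ℝ) :
    Complex.exp (Complex.I * (a : ℂ) * (x : ℂ) - Complex.I * (a : ℂ) ^ 2 * (t : ℂ))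
      = ∑' jk : ℕ × ℕ,
          (Complex.I * (x:ℂ)) ^ jk.1 / (Nat.factorial jk.1 : ℂ)
            * ((-Complex.I * (t:ℂ)) ^ jk.2 / (Nat.factorial jk.2 : ℂ))
            * (a : ℂ) ^ (jk.1 + 2 * jk.2) := by
  rw [show Complex.I * (a : ℂ) * (x : ℂ) - Complex.I * (a : ℂ) ^ 2 * (t : ℂ)
      = Complex.I * (a : ℂ) * (x : ℂ) + -Complex.I * (a : ℂ) ^ 2 * (t : ℂ) by ring,
    Complex.exp_add, expExp]

set_option maxHeartbeats 2000000 in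
theorem stmt18 (a : ℝ) (K : Set (ℝ × ℝ)) (hK : IsCompact K) :
    TendstoUniformlyOn
      (fun (N : ℕ) (p : ℝ × ℝ) =>
        ∑ ν ∈ Finset.range (N + 1),
          (N.choose ν : ℂ) * ((1 + (a : ℂ)) / 2) ^ (N - ν) * ((1 - (a : ℂ)) / 2) ^ ν *
            Complex.exp (Complex.I * (1 - 2 * (ν : ℂ) / (N : ℂ)) * (p.1 : ℂ)) *
            Complex.exp (-Complex.I * (1 - 2 * (ν : ℂ) / (N : ℂ)) ^ 2 * (p.2 : ℂ)))
      (fun p =>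
        Complex.exp (Complex.I * (a : ℂ) * (p.1 : ℂ) -
          Complex.I * (a : ℂ) ^ 2 * (p.2 : ℂ)))
      Filter.atTop K := by
  set A : ℝ := max 1 |a| with hA
  have hA1 : (1:ℝ) ≤ A := le_max_left _ _
  have hA0 : (0:ℝ) ≤ A := by linarith
  have hAa : |a| ≤ A := le_max_right _ _
  obtain ⟨R, hRK⟩ := hK.isBounded.subset_closedBall 0
  set R' : ℝ := max R 0 with hR'
  have hR'0 : (0:ℝ) ≤ R' := le_max_right _ _
  have hxt : ∀ p ∈ K, |p.1| ≤ R' ∧ |p.2| ≤ R' := by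
    intro p hp
    have h1 := hRK hp
    rw [Metric.mem_closedBall, dist_zero_right] at h1
    have hf : |p.1| ≤ ‖p‖ := norm_fst_le p
    have hs : |p.2| ≤ ‖p‖ := norm_snd_le p
    exact ⟨le_trans hf (le_trans h1 (le_max_left _ _)),
           le_trans hs (le_trans h1 (le_max_left _ _))⟩
  set G : ℕ × ℕ → ℝ := fun jk =>
    (R' * A) ^ jk.1 / (Nat.factorial jk.1) * ((R' * A ^ 2) ^ jk.2 / (Nat.factorial jk.2))
    with hG
  have hGnn : ∀ jk, 0 ≤ G jk := by
    intro jk; rw [hG]; positivity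
  have hGsum : Summable G :=
    (Real.summable_pow_div_factorial (R' * A)).mul_of_nonneg
      (Real.summable_pow_div_factorial (R' * A ^ 2))
      (fun j => by positivity) (fun k => by positivity)
  -- uniform bound on T_m
  have hTb : ∀ N : ℕ, 1 ≤ N → ∀ m : ℕ, ‖Sm a m N / (N : ℂ) ^ m‖ ≤ A ^ m := by
    intro N hN m
    have hNR : (1:ℝ) ≤ (N:ℝ) := by exact_mod_cast hN
    rw [norm_div, norm_pow, Complex.norm_natCast]
    rw [div_le_iff₀ (by positivity)]
    calc ‖Sm a m N‖ ≤ ((N : ℝ) * A) ^ m := Sm_bound a N m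
      _ = A ^ m * (N:ℝ) ^ m := by rw [mul_pow]; ring
  -- norm of coefficients
  have hcb : ∀ (x t : ℝ), |x| ≤ R' → |t| ≤ R' → ∀ jk : ℕ × ℕ,
      ‖(Complex.I * (x:ℂ)) ^ jk.1 / (Nat.factorial jk.1 : ℂ)
        * ((-Complex.I * (t:ℂ)) ^ jk.2 / (Nat.factorial jk.2 : ℂ))‖
      ≤ R' ^ jk.1 / (Nat.factorial jk.1) * (R' ^ jk.2 / (Nat.factorial jk.2)) := by
    intro x t hx ht jk
    rw [norm_mul, norm_div, norm_div, norm_pow, norm_pow, norm_mul, norm_mul,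
      Complex.norm_I, one_mul, Complex.norm_natCast, Complex.norm_natCast,
      norm_neg, Complex.norm_I, one_mul, Complex.norm_real, Complex.norm_real,
      Real.norm_eq_abs, Real.norm_eq_abs]
    gcongr <;> first | exact hx | exact ht | positivity
  rw [Metric.tendstoUniformlyOn_iff]
  intro ε hε
  -- choose finite S with small tail
  obtain ⟨S, hS⟩ : ∃ S : Finset (ℕ × ℕ), ∑' jk : {x : ℕ × ℕ // x ∉ S}, G jk < ε / 8 := by
    have htail := tendsto_tsum_compl_atTop_zero G
    exact ((tendsto_order.1 htail).2 _ (by positivity)).exists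
  set CS : ℝ := ∑ jk ∈ S, R' ^ jk.1 / (Nat.factorial jk.1) * (R' ^ jk.2 / (Nat.factorial jk.2))
    with hCS
  have hCS0 : 0 ≤ CS := Finset.sum_nonneg fun jk _ => by positivity
  set δ : ℝ := ε / (4 * (CS + 1)) with hδ
  have hδ0 : 0 < δ := by rw [hδ]; positivity
  have hev : ∀ᶠ N : ℕ in atTop, 1 ≤ N ∧ ∀ jk ∈ S,
      ‖Sm a (jk.1 + 2 * jk.2) N / (N : ℂ) ^ (jk.1 + 2 * jk.2) - (a:ℂ) ^ (jk.1 + 2 * jk.2)‖ < δ := by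
    refine (Filter.eventually_ge_atTop 1).and ?_
    rw [eventually_all_finset]
    intro jk _
    have := Metric.tendsto_nhds.mp (Tlim a (jk.1 + 2 * jk.2)) δ hδ0
    filter_upwards [this] with N hNd
    rwa [dist_eq_norm] at hNd
  filter_upwards [hev] with N hN
  obtain ⟨hN1, hNS⟩ := hN
  intro p hp
  obtain ⟨hx, ht⟩ := hxt p hp
  rw [dist_eq_norm, target_eq, FF_eq a N hN1]
  -- summability facts
  have s1 : Summable (fun jk : ℕ × ℕ =>
      (Complex.I * (p.1:ℂ)) ^ jk.1 / (Nat.factorial jk.1 : ℂ)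
        * ((-Complex.I * (p.2:ℂ)) ^ jk.2 / (Nat.factorial jk.2 : ℂ))
        * (a:ℂ) ^ (jk.1 + 2 * jk.2)) := summable_cl _ _ _
  have hwb : ∀ jk : ℕ × ℕ,
      ‖(Complex.I * (p.1:ℂ)) ^ jk.1 / (Nat.factorial jk.1 : ℂ)
        * ((-Complex.I * (p.2:ℂ)) ^ jk.2 / (Nat.factorial jk.2 : ℂ))
        * (Sm a (jk.1 + 2 * jk.2) N / (N : ℂ) ^ (jk.1 + 2 * jk.2))‖ ≤ G jk := by
    intro jk
    rw [norm_mul]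
    calc ‖(Complex.I * (p.1:ℂ)) ^ jk.1 / (Nat.factorial jk.1 : ℂ)
          * ((-Complex.I * (p.2:ℂ)) ^ jk.2 / (Nat.factorial jk.2 : ℂ))‖
          * ‖Sm a (jk.1 + 2 * jk.2) N / (N : ℂ) ^ (jk.1 + 2 * jk.2)‖
        ≤ (R' ^ jk.1 / (Nat.factorial jk.1) * (R' ^ jk.2 / (Nat.factorial jk.2)))
            * A ^ (jk.1 + 2 * jk.2) := by
          refine mul_le_mul (hcb p.1 p.2 hx ht jk) (hTb N hN1 _) (norm_nonneg _) (by positivity)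
      _ = G jk := by
          rw [hG]
          dsimp only
          rw [pow_add, pow_mul, mul_pow, mul_pow]
          ring
  have s2 : Summable (fun jk : ℕ × ℕ =>
      (Complex.I * (p.1:ℂ)) ^ jk.1 / (Nat.factorial jk.1 : ℂ)
        * ((-Complex.I * (p.2:ℂ)) ^ jk.2 / (Nat.factorial jk.2 : ℂ))
        * (Sm a (jk.1 + 2 * jk.2) N / (N : ℂ) ^ (jk.1 + 2 * jk.2))) :=
    Summable.of_norm_bounded hGsum hwb
  rw [← Summable.tsum_sub s1 s2]
  have hab : ∀ jk : ℕ × ℕ,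
      ‖(Complex.I * (p.1:ℂ)) ^ jk.1 / (Nat.factorial jk.1 : ℂ)
        * ((-Complex.I * (p.2:ℂ)) ^ jk.2 / (Nat.factorial jk.2 : ℂ))
        * (a:ℂ) ^ (jk.1 + 2 * jk.2)‖ ≤ G jk := by
    intro jk
    rw [norm_mul]
    calc ‖(Complex.I * (p.1:ℂ)) ^ jk.1 / (Nat.factorial jk.1 : ℂ)
          * ((-Complex.I * (p.2:ℂ)) ^ jk.2 / (Nat.factorial jk.2 : ℂ))‖
          * ‖(a:ℂ) ^ (jk.1 + 2 * jk.2)‖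
        ≤ (R' ^ jk.1 / (Nat.factorial jk.1) * (R' ^ jk.2 / (Nat.factorial jk.2)))
            * A ^ (jk.1 + 2 * jk.2) := by
          refine mul_le_mul (hcb p.1 p.2 hx ht jk) ?_ (norm_nonneg _) (by positivity)
          rw [norm_pow, Complex.norm_real, Real.norm_eq_abs]
          exact pow_le_pow_left₀ (abs_nonneg a) hAa _
      _ = G jk := by
          rw [hG]
          dsimp only
          rw [pow_add, pow_mul, mul_pow, mul_pow]
          ring
  -- norm summability of difference
  have hdiffb : ∀ jk : ℕ × ℕ,
      ‖(Complex.I * (p.1:ℂ)) ^ jk.1 / (Nat.factorial jk.1 : ℂ)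
        * ((-Complex.I * (p.2:ℂ)) ^ jk.2 / (Nat.factorial jk.2 : ℂ))
        * (a:ℂ) ^ (jk.1 + 2 * jk.2)
       - (Complex.I * (p.1:ℂ)) ^ jk.1 / (Nat.factorial jk.1 : ℂ)
        * ((-Complex.I * (p.2:ℂ)) ^ jk.2 / (Nat.factorial jk.2 : ℂ))
        * (Sm a (jk.1 + 2 * jk.2) N / (N : ℂ) ^ (jk.1 + 2 * jk.2))‖ ≤ 2 * G jk := by
    intro jk
    calc ‖_ - _‖ ≤ _ + _ := norm_sub_le _ _
      _ ≤ G jk + G jk := add_le_add (hab jk) (hwb jk)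
      _ = 2 * G jk := by ring
  have hnormsum : Summable (fun jk : ℕ × ℕ =>
      ‖(Complex.I * (p.1:ℂ)) ^ jk.1 / (Nat.factorial jk.1 : ℂ)
        * ((-Complex.I * (p.2:ℂ)) ^ jk.2 / (Nat.factorial jk.2 : ℂ))
        * (a:ℂ) ^ (jk.1 + 2 * jk.2)
       - (Complex.I * (p.1:ℂ)) ^ jk.1 / (Nat.factorial jk.1 : ℂ)
        * ((-Complex.I * (p.2:ℂ)) ^ jk.2 / (Nat.factorial jk.2 : ℂ))
        * (Sm a (jk.1 + 2 * jk.2) N / (N : ℂ) ^ (jk.1 + 2 * jk.2))‖) := by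
    refine Summable.of_nonneg_of_le (fun jk => norm_nonneg _) hdiffb ?_
    exact hGsum.mul_left 2
  calc ‖∑' jk : ℕ × ℕ,
        ((Complex.I * (p.1:ℂ)) ^ jk.1 / (Nat.factorial jk.1 : ℂ)
          * ((-Complex.I * (p.2:ℂ)) ^ jk.2 / (Nat.factorial jk.2 : ℂ))
          * (a:ℂ) ^ (jk.1 + 2 * jk.2)
         - (Complex.I * (p.1:ℂ)) ^ jk.1 / (Nat.factorial jk.1 : ℂ)
          * ((-Complex.I * (p.2:ℂ)) ^ jk.2 / (Nat.factorial jk.2 : ℂ))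
          * (Sm a (jk.1 + 2 * jk.2) N / (N : ℂ) ^ (jk.1 + 2 * jk.2)))‖
      ≤ ∑' jk : ℕ × ℕ,
        ‖(Complex.I * (p.1:ℂ)) ^ jk.1 / (Nat.factorial jk.1 : ℂ)
          * ((-Complex.I * (p.2:ℂ)) ^ jk.2 / (Nat.factorial jk.2 : ℂ))
          * (a:ℂ) ^ (jk.1 + 2 * jk.2)
         - (Complex.I * (p.1:ℂ)) ^ jk.1 / (Nat.factorial jk.1 : ℂ)
          * ((-Complex.I * (p.2:ℂ)) ^ jk.2 / (Nat.factorial jk.2 : ℂ))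
          * (Sm a (jk.1 + 2 * jk.2) N / (N : ℂ) ^ (jk.1 + 2 * jk.2))‖ :=
        norm_tsum_le_tsum_norm hnormsum
    _ < ε := by
        rw [← Summable.sum_add_tsum_compl (s := S) hnormsum]
        have hpart1 : ∑ jk ∈ S,
            ‖(Complex.I * (p.1:ℂ)) ^ jk.1 / (Nat.factorial jk.1 : ℂ)
              * ((-Complex.I * (p.2:ℂ)) ^ jk.2 / (Nat.factorial jk.2 : ℂ))
              * (a:ℂ) ^ (jk.1 + 2 * jk.2)
             - (Complex.I * (p.1:ℂ)) ^ jk.1 / (Nat.factorial jk.1 : ℂ)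
              * ((-Complex.I * (p.2:ℂ)) ^ jk.2 / (Nat.factorial jk.2 : ℂ))
              * (Sm a (jk.1 + 2 * jk.2) N / (N : ℂ) ^ (jk.1 + 2 * jk.2))‖ ≤ CS * δ := by
          rw [hCS, Finset.sum_mul]
          refine Finset.sum_le_sum fun jk hjk => ?_
          have heq : (Complex.I * (p.1:ℂ)) ^ jk.1 / (Nat.factorial jk.1 : ℂ)
              * ((-Complex.I * (p.2:ℂ)) ^ jk.2 / (Nat.factorial jk.2 : ℂ))
              * (a:ℂ) ^ (jk.1 + 2 * jk.2)
             - (Complex.I * (p.1:ℂ)) ^ jk.1 / (Nat.factorial jk.1 : ℂ)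
              * ((-Complex.I * (p.2:ℂ)) ^ jk.2 / (Nat.factorial jk.2 : ℂ))
              * (Sm a (jk.1 + 2 * jk.2) N / (N : ℂ) ^ (jk.1 + 2 * jk.2))
            = (Complex.I * (p.1:ℂ)) ^ jk.1 / (Nat.factorial jk.1 : ℂ)
              * ((-Complex.I * (p.2:ℂ)) ^ jk.2 / (Nat.factorial jk.2 : ℂ))
              * ((a:ℂ) ^ (jk.1 + 2 * jk.2)
                 - Sm a (jk.1 + 2 * jk.2) N / (N : ℂ) ^ (jk.1 + 2 * jk.2)) := by ring
          rw [heq, norm_mul]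
          refine mul_le_mul (hcb p.1 p.2 hx ht jk) ?_ (norm_nonneg _) (by positivity)
          rw [← norm_neg, neg_sub]
          exact le_of_lt (hNS jk hjk)
        have hpart2 : ∑' jk : {x : ℕ × ℕ // x ∉ S},
            ‖(Complex.I * (p.1:ℂ)) ^ (jk:ℕ×ℕ).1 / (Nat.factorial (jk:ℕ×ℕ).1 : ℂ)
              * ((-Complex.I * (p.2:ℂ)) ^ (jk:ℕ×ℕ).2 / (Nat.factorial (jk:ℕ×ℕ).2 : ℂ))
              * (a:ℂ) ^ ((jk:ℕ×ℕ).1 + 2 * (jk:ℕ×ℕ).2)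
             - (Complex.I * (p.1:ℂ)) ^ (jk:ℕ×ℕ).1 / (Nat.factorial (jk:ℕ×ℕ).1 : ℂ)
              * ((-Complex.I * (p.2:ℂ)) ^ (jk:ℕ×ℕ).2 / (Nat.factorial (jk:ℕ×ℕ).2 : ℂ))
              * (Sm a ((jk:ℕ×ℕ).1 + 2 * (jk:ℕ×ℕ).2) N / (N : ℂ) ^ ((jk:ℕ×ℕ).1 + 2 * (jk:ℕ×ℕ).2))‖
            ≤ 2 * ∑' jk : {x : ℕ × ℕ // x ∉ S}, G jk := by
          rw [← tsum_mul_left]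
          refine Summable.tsum_le_tsum (fun jk => hdiffb jk) (hnormsum.subtype _) ?_
          exact (hGsum.mul_left 2).subtype _
        have hδCS : CS * δ ≤ ε / 4 := by
          rw [hδ, ← mul_div_assoc,
            div_le_div_iff₀ (by positivity) (by norm_num : (0:ℝ) < 4)]
          nlinarith [hε.le, hCS0]
        calc _ ≤ CS * δ + 2 * ∑' jk : {x : ℕ × ℕ // x ∉ S}, G jk := add_le_add hpart1 hpart2
          _ ≤ ε / 4 + 2 * (ε / 8) := by
              refine add_le_add hδCS ?_
              have := le_of_lt hS
              linarith
          _ < ε := by linarith
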